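/- Let R be a difference ring (a commutative ring with an endomorphism σ) which is simple as a σ-ring (no nontrivial σ-stable ideals), finitely generated as an algebra over a difference field F whose constants K = F^σ are algebraically closed of characteristic zero. Then the ring of σ-constants of R equals K. -/

import Mathlib

set_option maxHeartbeats 1000000


open Polynomial

/-- In a nontrivial finitely generated algebra `R` over a field `F` of characteristic
zero, if `r : R` is transcendental over `F`, then some `r - n` (for a natural `n`)
is a non-unit. -/
theorem exists_nat_not_isUnit_sub
    {F : Type*} [Field F] [CharZero F] {R : Type*} [CommRing R] [Nontrivial R] [Algebra F R]
    (hFT : Algebra.FiniteType F R) (r : R)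
    (htr : ∀ p : F[X], p ≠ 0 → Polynomial.aeval r p ≠ 0) :
    ∃ n : ℕ, ¬ IsUnit (r - (n : R)) := by
  classical
  set A := Polynomial F with hA
  let ev : A →+* R := (Polynomial.aeval r : A →ₐ[F] R).toRingHom
  have hev : ∀ p : A, ev p = Polynomial.aeval r p := fun _ => rfl
  -- the multiplicative set of images of nonzero polynomials
  set S : Submonoid R := Submonoid.map (ev : A →* R) (nonZeroDivisors A) with hSdef
  set R' := Localization S with hR'
  have hS0 : ∀ x ∈ S, x ≠ 0 := by
    rintro x ⟨p, hp, rfl⟩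
    exact htr p (nonZeroDivisors.ne_zero hp)
  have : Nontrivial R' := by
    refine ⟨algebraMap R R' 1, 0, fun h => ?_⟩
    rw [show (0 : R') = algebraMap R R' 0 by simp] at h
    obtain ⟨m, hm⟩ := (IsLocalization.eq_iff_exists S R').mp h
    exact hS0 m m.2 (by simpa using hm)
  set E := FractionRing A with hE
  have hy : nonZeroDivisors A ≤ Submonoid.comap (ev : A →+* R) S := by
    intro p hp
    exact Submonoid.mem_map_of_mem _ hp
  let g0 : E →+* R' := IsLocalization.map (M := nonZeroDivisors A) (T := S) R' (ev : A →+* R) hy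
  obtain ⟨m', hm'⟩ := Ideal.exists_maximal R'
  haveI := hm'
  set M := R' ⧸ m' with hM
  letI : Field M := Ideal.Quotient.field m'
  let ψ : R →+* M := (Ideal.Quotient.mk m').comp (algebraMap R R')
  let gh : E →+* M := (Ideal.Quotient.mk m').comp g0
  have hcomm : gh.comp (algebraMap A E) = ψ.comp (ev : A →+* R) := by
    have h1 : g0.comp (algebraMap A E) = (algebraMap R R').comp (ev : A →+* R) :=
      IsLocalization.map_comp hy
    rw [show gh.comp (algebraMap A E) = (Ideal.Quotient.mk m').comp (g0.comp (algebraMap A E))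
      from rfl, h1]
    rfl
  have hcomm' : ∀ p : A, gh (algebraMap A E p) = ψ (ev p) := fun p => congrFun (congrArg (fun f : A →+* M => (f : A → M)) hcomm) p
  letI : Algebra E M := gh.toAlgebra
  have halgEM : (algebraMap E M) = gh := rfl
  have hghinj : Function.Injective gh := gh.injective
  obtain ⟨t, ht⟩ := hFT.out
  have hmemAdj : ∀ y : R, ψ y ∈ Algebra.adjoin E (ψ '' (t : Set R)) := by
    intro y
    have hy' : y ∈ Algebra.adjoin F (t : Set R) := ht ▸ Algebra.mem_top
    induction hy' using Algebra.adjoin_induction with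
    | mem x hx => exact Algebra.subset_adjoin (Set.mem_image_of_mem _ hx)
    | algebraMap a =>
        have heq : ψ (algebraMap F R a) = algebraMap E M (algebraMap A E (Polynomial.C a)) := by
          rw [halgEM, hcomm' (Polynomial.C a)]
          congr 1
          rw [hev]; simp
        rw [heq]; exact Subalgebra.algebraMap_mem _ _
    | add x y _ _ hx hy => rw [map_add]; exact add_mem hx hy
    | mul x y _ _ hx hy => rw [map_mul]; exact mul_mem hx hy
  have hadjtop : Algebra.adjoin E (ψ '' (t : Set R)) = ⊤ := by
    rw [eq_top_iff]
    rintro z -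
    obtain ⟨z', rfl⟩ := Ideal.Quotient.mk_surjective (I := m') z
    obtain ⟨x, s, rfl⟩ := IsLocalization.exists_mk'_eq S z'
    obtain ⟨p, hp, hps⟩ := s.2
    have hps' : ev p = (s : R) := hps
    have key : (Ideal.Quotient.mk m') (IsLocalization.mk' R' x s) * ψ (ev p) = ψ x := by
      rw [hps']
      have hspec := IsLocalization.mk'_spec R' x s
      calc (Ideal.Quotient.mk m') (IsLocalization.mk' R' x s) * ψ ((s : Submonoid.map (ev : A →* R) (nonZeroDivisors A)) : R)
          = (Ideal.Quotient.mk m') (IsLocalization.mk' R' x s * algebraMap R R' (s : R)) := rfl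
        _ = ψ x := by rw [hspec]; rfl
    set e : E := algebraMap A E p with he
    have he0 : e ≠ 0 := by
      rw [he]
      intro h
      exact nonZeroDivisors.ne_zero hp ((IsFractionRing.injective A E) (by simpa using h))
    have hgh0 : gh e ≠ 0 := fun h => he0 (hghinj (by simpa using h))
    have hpsgh : ψ (ev p) = gh e := (hcomm' p).symm
    have hz : (Ideal.Quotient.mk m') (IsLocalization.mk' R' x s) = ψ x * gh e⁻¹ := by
      rw [map_inv₀]
      field_simp [hgh0]
      rw [← key, hpsgh, mul_div_cancel_right₀ _ hgh0]
    rw [hz]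
    exact mul_mem (hmemAdj x) (by rw [← halgEM]; exact Subalgebra.algebraMap_mem _ _)
  haveI : Algebra.FiniteType E M :=
    ⟨⟨t.image (fun y => ψ y), by rw [Finset.coe_image]; exact hadjtop⟩⟩
  haveI : Module.Finite E M := finite_of_finite_type_of_isJacobsonRing E M
  haveI hIntEM : Algebra.IsIntegral E M := Algebra.IsIntegral.of_finite E M
  have hint : ∀ z : M, IsIntegral E z := fun z => Algebra.IsIntegral.isIntegral z
  set P : M → Polynomial E := fun z => (hint z).choose with hPdef
  have hPmonic : ∀ z, (P z).Monic := fun z => (hint z).choose_spec.1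
  have hPeval : ∀ z, Polynomial.eval₂ (algebraMap E M) z (P z) = 0 :=
    fun z => (hint z).choose_spec.2
  set Q : M → A := fun z =>
    (IsLocalization.integerNormalization (nonZeroDivisors A) (P z)).leadingCoeff with hQdef
  have hQne : ∀ z, Q z ≠ 0 := by
    intro z h
    have : IsLocalization.integerNormalization (nonZeroDivisors A) (P z) = 0 :=
      Polynomial.leadingCoeff_eq_zero.mp h
    exact (hPmonic z).ne_zero (IsFractionRing.integerNormalization_eq_zero_iff.mp this)
  -- the product of the leading coefficients of the normalized annihilators of generators
  set Φ : A := ∏ x ∈ t, Q (ψ x) with hΦdef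
  have hΦne : Φ ≠ 0 := Finset.prod_ne_zero_iff.mpr (fun x _ => hQne (ψ x))
  -- choose a natural number avoiding the (finitely many) roots of Φ
  have hfin : {n : ℕ | Polynomial.IsRoot Φ ((n : F))}.Finite := by
    have : {n : ℕ | Polynomial.IsRoot Φ ((n : F))} =
        (fun n : ℕ => (n : F)) ⁻¹' {x : F | Polynomial.IsRoot Φ x} := rfl
    rw [this]
    exact Set.Finite.preimage (Function.Injective.injOn Nat.cast_injective)
      (Polynomial.finite_setOf_isRoot hΦne)
  obtain ⟨n, hn⟩ := hfin.infinite_compl.nonempty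
  set c : F := (n : F) with hc
  have hΦc : Polynomial.eval c Φ ≠ 0 := hn
  refine ⟨n, ?_⟩
  -- the prime ideal (X - c) of A = F[X] and its localization
  set Pc : Ideal A := Ideal.span {(Polynomial.X : A) - Polynomial.C c} with hPc
  haveI hPcmax : Pc.IsMaximal :=
    PrincipalIdealRing.isMaximal_of_irreducible (Polynomial.irreducible_X_sub_C c)
  haveI hPcprime : Pc.IsPrime := hPcmax.isPrime
  set L := Localization.AtPrime Pc with hL
  set φ : A →+* M := ψ.comp (ev : A →+* R) with hφ
  have hφcomm : ∀ p : A, φ p = gh (algebraMap A E p) := fun p => (hcomm' p).symm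
  have hφinj : Function.Injective φ := by
    have : (φ : A → M) = (gh : E → M) ∘ (algebraMap A E : A → E) := funext hφcomm
    rw [this]
    exact hghinj.comp (IsFractionRing.injective A E)
  have hunits : ∀ s : Pc.primeCompl, IsUnit (φ s) := by
    intro s
    rw [isUnit_iff_ne_zero]
    intro h
    have hs0 : (s : A) = 0 := hφinj (show φ (s : A) = φ 0 by rw [map_zero]; exact h)
    exact s.2 (hs0 ▸ Pc.zero_mem)
  haveI : IsLocalization Pc.primeCompl L := Localization.isLocalization
  set Λ : L →+* M := IsLocalization.lift hunits with hΛdef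
  have hΛ : ∀ p : A, Λ (algebraMap A L p) = φ p := fun p => IsLocalization.lift_eq hunits p
  letI : Algebra L M := Λ.toAlgebra
  have halgLM : (algebraMap L M) = Λ := rfl
  have hALinj : Function.Injective (algebraMap A L) :=
    IsLocalization.injective L Pc.primeCompl_le_nonZeroDivisors
  have hΛinj : Function.Injective Λ := by
    rw [injective_iff_map_eq_zero]
    intro z hz
    obtain ⟨a, s, rfl⟩ := IsLocalization.exists_mk'_eq Pc.primeCompl z
    have hspec : IsLocalization.mk' L a s * algebraMap A L (s : A) = algebraMap A L a :=
      IsLocalization.mk'_spec L a s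
    have : φ a = 0 := by
      rw [← hΛ a, ← hspec, map_mul, hz, zero_mul]
    have ha : a = 0 := hφinj (by simpa using this)
    rw [ha, IsLocalization.mk'_zero]
  -- the generators are integral over L
  have hintL : ∀ z ∈ (ψ '' (t : Set R)), IsIntegral L z := by
    rintro z ⟨x, hx, rfl⟩
    set N : Polynomial A := IsLocalization.integerNormalization (nonZeroDivisors A) (P (ψ x))
      with hN
    have hNlead : N.leadingCoeff = Q (ψ x) := rfl
    have heval2 : Polynomial.eval₂ φ (ψ x) N = 0 := by
      have h0 := IsLocalization.integerNormalization_eval₂_eq_zero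
        (M := nonZeroDivisors A) (algebraMap E M) (P (ψ x)) (hPeval (ψ x))
      have : (algebraMap E M).comp (algebraMap A E) = φ := by
        rw [halgEM, hφ, hcomm]
      rwa [this] at h0
    have hevalL : Polynomial.eval₂ Λ (ψ x) (N.map (algebraMap A L)) = 0 := by
      rw [Polynomial.eval₂_map]
      have : Λ.comp (algebraMap A L) = φ := IsLocalization.lift_comp hunits
      rwa [this]
    have hlead : (N.map (algebraMap A L)).leadingCoeff = algebraMap A L (Q (ψ x)) := by
      rw [Polynomial.leadingCoeff_map_of_injective hALinj, hNlead]
    have hILC := RingHom.isIntegralElem_leadingCoeff_mul (f := Λ) (N.map (algebraMap A L))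
      (ψ x) hevalL
    rw [hlead] at hILC
    -- the leading coefficient is a unit in L since it does not vanish at c
    have hQc : Polynomial.eval c (Q (ψ x)) ≠ 0 := by
      intro h
      apply hΦc
      rw [hΦdef]
      rw [Polynomial.eval_prod]
      exact Finset.prod_eq_zero hx h
    have hQmem : Q (ψ x) ∈ Pc.primeCompl := by
      intro hmem
      apply hQc
      have hmem' : Q (ψ x) ∈ Pc := hmem
      rw [hPc, Ideal.mem_span_singleton] at hmem'
      exact Polynomial.dvd_iff_isRoot.mp hmem'
    have hu : IsUnit (algebraMap A L (Q (ψ x))) :=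
      (IsLocalization.AtPrime.isUnit_to_map_iff L Pc (Q (ψ x))).mpr hQmem
    set u : L := algebraMap A L (Q (ψ x)) with hu'
    have h1 : IsIntegral L (algebraMap L M u * ψ x) := hILC
    have h2 : ψ x = algebraMap L M (↑hu.unit⁻¹ : L) * (algebraMap L M u * ψ x) := by
      rw [← mul_assoc, ← map_mul, IsUnit.val_inv_mul, map_one, one_mul]
    rw [h2]
    exact (isIntegral_algebraMap).mul h1
  -- the subalgebra generated by the images of the generators is integral over L
  set T : Subalgebra L M := Algebra.adjoin L (ψ '' (t : Set R)) with hT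
  haveI hTint : Algebra.IsIntegral L T := Algebra.IsIntegral.adjoin hintL
  have hcoeT : ∀ z : L, ((algebraMap L T z : T) : M) = Λ z := fun z => rfl
  have hTinj : Function.Injective (algebraMap L T) := by
    intro a b h
    exact hΛinj (by rw [← hcoeT a, ← hcoeT b, h])
  obtain ⟨QT, hQTmax, hQTcomap⟩ :=
    Ideal.exists_ideal_over_maximal_of_isIntegral (R := L) (S := T)
      (IsLocalRing.maximalIdeal L)
      (by rw [(RingHom.injective_iff_ker_eq_bot _).mp hTinj]; exact bot_le)
  -- ψ maps R into T
  have hmemT : ∀ y : R, ψ y ∈ T := by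
    intro y
    have hy' : y ∈ Algebra.adjoin F (t : Set R) := ht ▸ Algebra.mem_top
    induction hy' using Algebra.adjoin_induction with
    | mem x hx => exact Algebra.subset_adjoin (Set.mem_image_of_mem _ hx)
    | algebraMap a =>
        have h1 : ψ (algebraMap F R a) = φ (Polynomial.C a) := by
          show ψ (algebraMap F R a) = ψ (ev (Polynomial.C a))
          congr 1
          rw [hev]; simp
        have h2 : φ (Polynomial.C a) = algebraMap L M (algebraMap A L (Polynomial.C a)) := by
          rw [halgLM, hΛ]
        rw [h1, h2]
        exact Subalgebra.algebraMap_mem _ _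
    | add x y _ _ hx hy => rw [map_add]; exact add_mem hx hy
    | mul x y _ _ hx hy => rw [map_mul]; exact mul_mem hx hy
  set ρ : R →+* T :=
    { toFun := fun y => ⟨ψ y, hmemT y⟩
      map_one' := Subtype.ext (map_one ψ)
      map_mul' := fun a b => Subtype.ext (map_mul ψ a b)
      map_zero' := Subtype.ext (map_zero ψ)
      map_add' := fun a b => Subtype.ext (map_add ψ a b) } with hρ
  -- the key element
  have hxPc : (Polynomial.X : A) - Polynomial.C c ∈ Pc := Ideal.subset_span rfl
  set z₀ : L := algebraMap A L ((Polynomial.X : A) - Polynomial.C c) with hz₀def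
  have hz₀ : z₀ ∈ IsLocalRing.maximalIdeal L :=
    (IsLocalization.AtPrime.to_map_mem_maximal_iff L Pc _).mpr hxPc
  have hz₀' : algebraMap L T z₀ ∈ QT := by
    rw [← hQTcomap] at hz₀
    exact hz₀
  have heq : ρ (r - algebraMap F R c) = algebraMap L T z₀ := by
    apply Subtype.ext
    have h1 : ψ (r - algebraMap F R c) = φ ((Polynomial.X : A) - Polynomial.C c) := by
      show ψ (r - algebraMap F R c) = ψ (ev ((Polynomial.X : A) - Polynomial.C c))
      congr 1
      rw [hev]; simp
    show ψ (r - algebraMap F R c) = _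
    rw [h1, hcoeT, hΛ]
  have hnotunit : ¬ IsUnit (r - algebraMap F R c) := by
    intro h
    have := Ideal.eq_top_of_isUnit_mem QT (heq ▸ hz₀') (h.map ρ)
    exact hQTmax.ne_top this
  intro h
  apply hnotunit
  rwa [hc, map_natCast]



/-- The fixed subfield `F^σ` of an automorphism `σ` of a field `F`. -/
def fixedSubfield {F : Type*} [Field F] (σ : F ≃+* F) : Subfield F where
  carrier := {a | σ a = a}
  zero_mem' := by simp
  one_mem' := by simp
  add_mem' := by intro a b ha hb; simp only [Set.mem_setOf_eq, map_add] at *; rw [ha, hb]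
  mul_mem' := by intro a b ha hb; simp only [Set.mem_setOf_eq, map_mul] at *; rw [ha, hb]
  neg_mem' := by intro a ha; simp only [Set.mem_setOf_eq, map_neg] at *; rw [ha]
  inv_mem' := by intro a ha; simp only [Set.mem_setOf_eq, map_inv₀] at *; rw [ha]

/-- van der Put–Singer, Lemma 1.8: let `R` be a σ-simple
difference ring, finitely generated as an algebra over a difference field `F`
of characteristic zero whose constants `K = F^σ` are algebraically closed.
Then every σ-constant of `R` comes from `K`. -/
theorem constants_of_simple_difference_ring
    {F : Type*} [Field F] [CharZero F] (σF : F ≃+* F)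
    (R : Type*) [CommRing R] [Nontrivial R] [Algebra F R]
    (hFT : Algebra.FiniteType F R)
    (σR : R →+* R)
    (hcompat : ∀ a : F, σR (algebraMap F R a) = algebraMap F R (σF a))
    (hsimple : ∀ I : Ideal R, (∀ x ∈ I, σR x ∈ I) → I = ⊥ ∨ I = ⊤)
    (hK : IsAlgClosed (fixedSubfield σF)) :
    ∀ r : R, σR r = r → ∃ a : F, σF a = a ∧ algebraMap F R a = r := by
  intro r hr
  classical
  -- every nonzero σ-constant is a unit
  have hunit : ∀ x : R, σR x = x → x ≠ 0 → IsUnit x := by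
    intro x hx hx0
    have hσI : ∀ y ∈ Ideal.span {x}, σR y ∈ Ideal.span {x} := by
      intro y hy
      rw [Ideal.mem_span_singleton] at hy ⊢
      obtain ⟨z, rfl⟩ := hy
      exact ⟨σR z, by rw [map_mul, hx]⟩
    rcases hsimple (Ideal.span {x}) hσI with h | h
    · exact absurd (Ideal.span_singleton_eq_bot.mp h) hx0
    · exact (Ideal.span_singleton_eq_top).mp h
  by_cases halg : ∃ p : Polynomial F, p ≠ 0 ∧ (Polynomial.aeval r) p = 0
  · -- algebraic case
    obtain ⟨p₀, hp₀, hp₀0⟩ := halg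
    have hex : ∃ n, ∃ p : Polynomial F, p.Monic ∧ (Polynomial.aeval r) p = 0 ∧
        p.natDegree = n :=
      ⟨_, p₀ * Polynomial.C (p₀.leadingCoeff)⁻¹, Polynomial.monic_mul_leadingCoeff_inv hp₀,
        by rw [map_mul, hp₀0, zero_mul], rfl⟩
    set n₀ := Nat.find hex with hn₀
    obtain ⟨P, hPm, hP0, hPdeg⟩ := Nat.find_spec hex
    have hmin : ∀ m, m < n₀ → ¬ ∃ p : Polynomial F, p.Monic ∧ (Polynomial.aeval r) p = 0 ∧
        p.natDegree = m := fun m hm => Nat.find_min hex hm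
    have hn₀pos : 0 < n₀ := by
      rcases Nat.eq_zero_or_pos n₀ with h0 | h
      · exfalso
        have hPdeg0 : P.natDegree = 0 := by rw [hPdeg, ← hn₀, h0]
        have : P = 1 := (hPm.natDegree_eq_zero).mp hPdeg0
        rw [this, map_one] at hP0
        exact one_ne_zero hP0
      · exact h
    have hinjF : Function.Injective (σF : F →+* F) := σF.injective
    have haevalmap : ∀ p : Polynomial F,
        (Polynomial.aeval r) (p.map (σF : F →+* F)) = σR ((Polynomial.aeval r) p) := by
      intro p
      have h1 : (algebraMap F R).comp (σF : F →+* F) = σR.comp (algebraMap F R) :=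
        RingHom.ext fun a => (hcompat a).symm
      calc (Polynomial.aeval r) (p.map (σF : F →+* F))
          = Polynomial.eval₂ ((algebraMap F R).comp (σF : F →+* F)) r p := by
            rw [Polynomial.aeval_def, Polynomial.eval₂_map]
        _ = Polynomial.eval₂ (σR.comp (algebraMap F R)) (σR r) p := by rw [h1, hr]
        _ = σR (Polynomial.eval₂ (algebraMap F R) r p) := (Polynomial.hom_eval₂ _ _ _ _).symm
        _ = σR ((Polynomial.aeval r) p) := rfl
    have hσP : P.map (σF : F →+* F) = P := by
      by_contra hne
      set h := P.map (σF : F →+* F) - P with hh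
      have hne0 : h ≠ 0 := sub_ne_zero.mpr hne
      have haeh : (Polynomial.aeval r) h = 0 := by
        rw [hh, map_sub, haevalmap, hP0, map_zero, sub_zero]
      have hdeglt : h.degree < P.degree := by
        have hdm : (P.map (σF : F →+* F)).degree = P.degree :=
          Polynomial.degree_map_eq_of_injective hinjF P
        have h1 : h.degree < (P.map (σF : F →+* F)).degree := by
          rw [hh]
          exact Polynomial.degree_sub_lt hdm (hPm.map _).ne_zero
            (by rw [Polynomial.leadingCoeff_map_of_injective hinjF, hPm.leadingCoeff, map_one])
        rwa [hdm] at h1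
      apply hmin (h * Polynomial.C h.leadingCoeff⁻¹).natDegree
      · rw [Polynomial.natDegree_mul_C (inv_ne_zero (Polynomial.leadingCoeff_ne_zero.mpr hne0))]
        rw [hn₀]
        calc h.natDegree < P.natDegree := Polynomial.natDegree_lt_natDegree hne0 hdeglt
          _ = Nat.find hex := hPdeg
      · exact ⟨h * Polynomial.C h.leadingCoeff⁻¹, Polynomial.monic_mul_leadingCoeff_inv hne0,
          by rw [map_mul, haeh, zero_mul], rfl⟩
    have hcoeff : ∀ i, σF (P.coeff i) = P.coeff i := by
      intro i
      conv_rhs => rw [← hσP, Polynomial.coeff_map]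
      rfl
    haveI := hK
    have hcsub : (↑P.coeffs : Set F) ⊆ ((fixedSubfield σF).toSubring : Set F) := by
      intro x hx
      rw [Finset.mem_coe, Polynomial.mem_coeffs_iff] at hx
      obtain ⟨i, _, rfl⟩ := hx
      exact hcoeff i
    set P'0 := P.toSubring (fixedSubfield σF).toSubring hcsub with hP'0
    have hmap0 : P'0.map (fixedSubfield σF).toSubring.subtype = P := Polynomial.map_toSubring _ _ _
    let e : ((fixedSubfield σF).toSubring) ≃+* (fixedSubfield σF) :=
      { toFun := fun x => ⟨x.1, x.2⟩
        invFun := fun x => ⟨x.1, x.2⟩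
        left_inv := fun x => rfl
        right_inv := fun x => rfl
        map_mul' := fun x y => rfl
        map_add' := fun x y => rfl }
    set P' := P'0.map (e : ((fixedSubfield σF).toSubring) →+* (fixedSubfield σF)) with hP'
    have hmap : P'.map (fixedSubfield σF).subtype = P := by
      rw [hP', Polynomial.map_map]
      have : ((fixedSubfield σF).subtype).comp
          (e : ((fixedSubfield σF).toSubring) →+* (fixedSubfield σF))
          = (fixedSubfield σF).toSubring.subtype := RingHom.ext fun x => rfl
      rw [this, hmap0]
    have hsubinj : Function.Injective ((fixedSubfield σF).subtype) :=
      Subtype.val_injective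
    have hdegP' : P'.degree = P.degree := by
      conv_rhs => rw [← hmap]
      rw [Polynomial.degree_map_eq_of_injective hsubinj]
    have hdeg0 : P'.degree ≠ 0 := by
      rw [hdegP', Polynomial.degree_eq_natDegree hPm.ne_zero]
      have hnz : P.natDegree ≠ 0 := by
        rw [hPdeg, ← hn₀]
        omega
      exact_mod_cast hnz
    obtain ⟨c'', hc''⟩ := IsAlgClosed.exists_root P' hdeg0
    obtain ⟨P₁, hfac⟩ := Polynomial.dvd_iff_isRoot.mpr hc''
    set ι := (fixedSubfield σF).subtype with hι
    set c : F := (c'' : F) with hcdef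
    have hPfac : P = (Polynomial.X - Polynomial.C c) * (P₁.map ι) := by
      conv_lhs => rw [← hmap]
      rw [hfac, Polynomial.map_mul, Polynomial.map_sub, Polynomial.map_X, Polynomial.map_C]
      rfl
    have hcfix : σF c = c := c''.2
    by_cases hz : r - algebraMap F R c = 0
    · exact ⟨c, hcfix, (sub_eq_zero.mp hz).symm⟩
    · exfalso
      have hu : IsUnit (r - algebraMap F R c) :=
        hunit _ (by rw [map_sub, hr, hcompat, hcfix]) hz
      have hP1monic : (P₁.map ι).Monic :=
        (Polynomial.monic_X_sub_C c).of_mul_monic_left (hPfac ▸ hPm)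
      have h10 : (Polynomial.aeval r) (P₁.map ι) = 0 := by
        have h' := hP0
        rw [hPfac, map_mul] at h'
        have haX : (Polynomial.aeval r) (Polynomial.X - Polynomial.C c)
            = r - algebraMap F R c := by simp
        rw [haX] at h'
        exact (IsUnit.mul_right_eq_zero hu).mp h'
      apply hmin (P₁.map ι).natDegree ?_ ⟨_, hP1monic, h10, rfl⟩
      have hdd : P.natDegree = 1 + (P₁.map ι).natDegree := by
        rw [hPfac, (Polynomial.monic_X_sub_C c).natDegree_mul' hP1monic.ne_zero,
          Polynomial.natDegree_X_sub_C]
      rw [hn₀]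
      omega
  · -- transcendental case
    have htr : ∀ p : Polynomial F, p ≠ 0 → (Polynomial.aeval r) p ≠ 0 :=
      fun p hp h => halg ⟨p, hp, h⟩
    obtain ⟨n, hn⟩ := exists_nat_not_isUnit_sub hFT r htr
    have hfix : σR (r - algebraMap F R ((n : F))) = r - algebraMap F R ((n : F)) := by
      rw [map_sub, hr, hcompat, map_natCast]
    have hz : r - algebraMap F R ((n : F)) = 0 := by
      by_contra h0
      apply hn
      have := hunit _ hfix h0
      rwa [map_natCast] at this
    exact ⟨(n : F), map_natCast σF n, (sub_eq_zero.mp hz).symm⟩
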